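/- arXiv:math/0302055 — 3 statements merged into one kernel-verified Lean document; each statement's English description precedes it below -/
import Mathlib

section
/- For every complex number $y$ with $|y| < 1$, one has $\sum_{0 < j < k} \frac{y^k}{j\,k} = \frac{1}{2}\left(\log(1-y)\right)^2$, i.e. $Li_{1,1}(1,y) = \frac{1}{2} Li_1(y)^2$ where $Li_1(y) = -\log(1-y)$. -/
set_option maxHeartbeats 1000000 in
/-- `Li_{1,1}(1,y) = ∑_{0<j<k} y^k/(jk) = (log(1-y))²/2 = Li₁(y)²/2`
for `|y| < 1`, with the principal branch of the logarithm. -/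
theorem doubleLog_one_left (y : ℂ) (hy : ‖y‖ < 1) :
    (∑' p : ℕ × ℕ,
      if 0 < p.1 ∧ p.1 < p.2 then y ^ p.2 / ((p.1 : ℂ) * (p.2 : ℂ)) else 0)
      = (Complex.log (1 - y)) ^ 2 / 2 := by
  set L := Complex.log (1 - y) with hL
  set f : ℕ × ℕ → ℂ :=
    fun p => if 0 < p.1 ∧ p.1 < p.2 then y ^ p.2 / ((p.1 : ℂ) * (p.2 : ℂ)) else 0 with hf
  -- the Taylor series of -log(1-y)
  have hlog : HasSum (fun n : ℕ => y ^ n / n) (-L) := Complex.hasSum_taylorSeries_neg_log hy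
  -- norm summability of the product family
  have hsumnorm : Summable (fun p : ℕ × ℕ => ‖(y ^ p.1 / (p.1 : ℂ)) * (y ^ p.2 / (p.2 : ℂ))‖) :=
    Summable.mul_norm (f := fun n : ℕ => y ^ n / n) (g := fun n : ℕ => y ^ n / n)
      hlog.summable.norm hlog.summable.norm
  have hprodsum : Summable (fun p : ℕ × ℕ => (y ^ p.1 / (p.1 : ℂ)) * (y ^ p.2 / (p.2 : ℂ))) :=
    hsumnorm.of_norm
  -- Cauchy-type product: sum over all pairs equals L^2
  have hprod : HasSum (fun p : ℕ × ℕ => (y ^ p.1 / (p.1 : ℂ)) * (y ^ p.2 / (p.2 : ℂ))) (L ^ 2) := by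
    have := hlog.mul hlog hprodsum
    rwa [neg_mul_neg, ← sq] at this
  -- the two injections (m,n) ↦ (m, m+n) and (m,n) ↦ (n, m+n)
  have he1 : Function.Injective (fun p : ℕ × ℕ => (p.1, p.1 + p.2)) := by
    intro p q h
    simp only [Prod.mk.injEq] at h
    obtain ⟨h1, h2⟩ := h
    exact Prod.ext h1 (by omega)
  have he2 : Function.Injective (fun p : ℕ × ℕ => (p.2, p.1 + p.2)) := by
    intro p q h
    simp only [Prod.mk.injEq] at h
    obtain ⟨h1, h2⟩ := h
    exact Prod.ext (by omega) h1
  have hr1 : ∀ x ∉ Set.range (fun p : ℕ × ℕ => (p.1, p.1 + p.2)), f x = 0 := by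
    rintro ⟨j, k⟩ hx
    simp only [Set.mem_range, Prod.mk.injEq, Prod.exists, not_exists] at hx
    have : ¬ j ≤ k := by
      intro h
      exact hx j (k - j) ⟨rfl, by omega⟩
    simp only [hf]
    rw [if_neg]; omega
  have hr2 : ∀ x ∉ Set.range (fun p : ℕ × ℕ => (p.2, p.1 + p.2)), f x = 0 := by
    rintro ⟨j, k⟩ hx
    simp only [Set.mem_range, Prod.mk.injEq, Prod.exists, not_exists] at hx
    have : ¬ j ≤ k := by
      intro h
      exact hx (k - j) j ⟨rfl, by omega⟩
    simp only [hf]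
    rw [if_neg]; omega
  -- pointwise identity: product term splits into the two shifted copies of f
  have hkey : ∀ p : ℕ × ℕ, (y ^ p.1 / (p.1 : ℂ)) * (y ^ p.2 / (p.2 : ℂ))
      = f (p.1, p.1 + p.2) + f (p.2, p.1 + p.2) := by
    rintro ⟨m, n⟩
    simp only [hf]
    rcases Nat.eq_zero_or_pos m with hm | hm
    · subst hm
      simp
    rcases Nat.eq_zero_or_pos n with hn | hn
    · subst hn
      rw [if_neg (by omega), if_neg (by omega)]
      simp
    rw [if_pos ⟨hm, by omega⟩, if_pos ⟨hn, by omega⟩]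
    have hmc : (m : ℂ) ≠ 0 := Nat.cast_ne_zero.mpr (by omega)
    have hnc : (n : ℂ) ≠ 0 := Nat.cast_ne_zero.mpr (by omega)
    have hmnc : ((m : ℂ) + n) ≠ 0 := by
      have : ((m + n : ℕ) : ℂ) ≠ 0 := Nat.cast_ne_zero.mpr (by omega)
      push_cast at this
      exact this
    push_cast
    rw [pow_add]
    field_simp
    ring
  -- summability of f
  have hsf1 : Summable (f ∘ (fun p : ℕ × ℕ => (p.1, p.1 + p.2))) := by
    refine hsumnorm.of_norm_bounded ?_
    rintro ⟨m, n⟩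
    simp only [hf, Function.comp]
    by_cases h : 0 < m ∧ m < m + n
    · rw [if_pos h]
      obtain ⟨hm, hn⟩ := h
      have hn' : 0 < n := by omega
      rw [norm_mul, norm_div, norm_div, norm_div, norm_mul, norm_pow, norm_pow, norm_pow,
        Complex.norm_natCast, Complex.norm_natCast, Complex.norm_natCast,
        pow_add, div_mul_div_comm]
      gcongr
      exact Nat.le_add_left n m
    · rw [if_neg h]
      simp only [norm_zero]
      positivity
  have hsf : Summable f := (he1.summable_iff hr1).mp hsf1
  obtain ⟨S, hS⟩ := hsf
  have hS1 : HasSum (f ∘ (fun p : ℕ × ℕ => (p.1, p.1 + p.2))) S :=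
    (he1.hasSum_iff hr1).mpr hS
  have hS2 : HasSum (f ∘ (fun p : ℕ × ℕ => (p.2, p.1 + p.2))) S :=
    (he2.hasSum_iff hr2).mpr hS
  have hsum2 : HasSum (fun p : ℕ × ℕ => (y ^ p.1 / (p.1 : ℂ)) * (y ^ p.2 / (p.2 : ℂ))) (S + S) := by
    have := hS1.add hS2
    refine this.congr_fun fun p => ?_
    exact hkey p
  have : S + S = L ^ 2 := hsum2.unique hprod
  rw [hS.tsum_eq]
  rw [eq_div_iff (two_ne_zero)]
  rw [← this]
  ring
end

section
/- For all complex numbers $x, y$ with $|x| < 1$ and $|y| < 1$, one has $Li_{1,1}(x,y) = Li_2\left(\frac{xy - y}{1-y}\right) - Li_2\left(\frac{y}{y-1}\right) - Li_2(xy)$. -/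
/-- The real dilogarithm `Li₂(x) = -∫_0^x log(1-s)/s ds` (for `x < 1`). -/
noncomputable def Li2R (x : ℝ) : ℝ := -∫ s in (0:ℝ)..x, Real.log (1 - s) / s

/-- The double logarithm `Li_{1,1}(x,y) = ∑_{0<j<k} x^j y^k/(jk)`. -/
noncomputable def Li11 (x y : ℝ) : ℝ :=
  ∑' p : ℕ × ℕ, if 0 < p.1 ∧ p.1 < p.2 then x ^ p.1 * y ^ p.2 / ((p.1 : ℝ) * (p.2 : ℝ)) else 0


open Filter MeasureTheory Set intervalIntegral


noncomputable def gL (s : ℝ) : ℝ := if s = 0 then -1 else Real.log (1 - s) / s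

lemma gL_ne {s : ℝ} (hs : s ≠ 0) : gL s = Real.log (1 - s) / s := if_neg hs

lemma gL_zero : gL 0 = -1 := if_pos rfl

lemma gL_contAt {s : ℝ} (hs : s < 1) : ContinuousAt gL s := by
  rcases eq_or_ne s 0 with rfl | hne
  · -- continuity at 0 via slope of log(1-s)
    have hd : HasDerivAt (fun u : ℝ => Real.log (1 - u)) (-1) 0 := by
      have h1 : HasDerivAt (fun u : ℝ => 1 - u) (-1) 0 := by
        exact (hasDerivAt_id' 0).const_sub (1:ℝ)
      have := (Real.hasDerivAt_log (by norm_num : (1:ℝ) - 0 ≠ 0)).comp 0 h1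
      exact this.congr_deriv (by norm_num)
    have hslope := hasDerivAt_iff_tendsto_slope.1 hd
    have heq : ∀ u : ℝ, u ≠ 0 → slope (fun u : ℝ => Real.log (1 - u)) 0 u = gL u := by
      intro u hu
      rw [slope_def_field, gL_ne hu]
      simp [div_eq_div_iff]
    have h2 : Tendsto gL (nhdsWithin 0 {(0:ℝ)}ᶜ) (nhds (-1)) := by
      refine hslope.congr' ?_
      filter_upwards [self_mem_nhdsWithin] with u hu using heq u hu
    have h3 : Tendsto gL (pure (0:ℝ)) (nhds (-1)) := by
      simpa [gL_zero] using tendsto_pure_nhds gL (0:ℝ)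
    have : Tendsto gL (nhdsWithin 0 {(0:ℝ)}ᶜ ⊔ pure 0) (nhds (-1)) := h2.sup h3
    rw [nhdsNE_sup_pure] at this
    simpa [ContinuousAt, gL_zero] using this
  · have h1 : ContinuousAt (fun u : ℝ => Real.log (1 - u) / u) s := by
      apply ContinuousAt.div
      · exact (Real.continuousAt_log (by linarith)).comp (by fun_prop)
      · fun_prop
      · exact hne
    apply h1.congr
    filter_upwards [isOpen_ne.mem_nhds hne] with u hu
    rw [gL_ne hu]

lemma gL_contOn : ContinuousOn gL (Iio (1:ℝ)) :=
  fun s hs => (gL_contAt hs).continuousWithinAt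

lemma Li2R_eq (t : ℝ) : Li2R t = -∫ s in (0:ℝ)..t, gL s := by
  unfold Li2R
  congr 1
  apply intervalIntegral.integral_congr_ae
  have h0 : (volume : Measure ℝ) {(0:ℝ)} = 0 := measure_singleton 0
  refine MeasureTheory.ae_iff.2 (measure_mono_null ?_ h0)
  intro s hs
  simp only [Set.mem_setOf_eq, not_forall] at hs
  by_contra hne
  exact hs.2 (by rw [gL_ne hne])

lemma Li2R_hasDerivAt {t : ℝ} (ht : t < 1) : HasDerivAt Li2R (-(gL t)) t := by
  have hsub : Set.uIcc (0:ℝ) t ⊆ Iio (1:ℝ) := by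
    intro s hs
    rcases Set.mem_uIcc.1 hs with h | h
    · exact lt_of_le_of_lt h.2 ht
    · exact lt_of_le_of_lt h.2 (by norm_num)
  have hint : IntervalIntegrable gL volume 0 t :=
    (gL_contOn.mono hsub).intervalIntegrable
  have hmeas : StronglyMeasurableAtFilter gL (nhds t) :=
    ContinuousOn.stronglyMeasurableAtFilter isOpen_Iio gL_contOn t ht
  have := intervalIntegral.integral_hasDerivAt_right hint hmeas (gL_contAt ht)
  have h2 : HasDerivAt (fun u => -∫ s in (0:ℝ)..u, gL s) (-(gL t)) t := this.neg
  apply h2.congr_of_eventuallyEq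
  filter_upwards with u using Li2R_eq u

lemma Li2R_zero : Li2R 0 = 0 := by simp [Li2R]

noncomputable def cc (x : ℝ) (m : ℕ) : ℝ := ∑ j ∈ Finset.range m, x ^ (j+1) / (j+1)

lemma summable_geom_prod {x t : ℝ} (hx : |x| < 1) (ht : |t| < 1) :
    Summable (fun p : ℕ × ℕ => |x| ^ p.1 * |t| ^ p.2) := by
  have hx' : Summable (fun n : ℕ => ‖|x| ^ n‖) := by
    simpa [abs_abs, abs_pow] using summable_geometric_of_lt_one (abs_nonneg x) hx
  have ht' : Summable (fun n : ℕ => ‖|t| ^ n‖) := by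
    simpa [abs_abs, abs_pow] using summable_geometric_of_lt_one (abs_nonneg t) ht
  exact summable_mul_of_summable_norm hx' ht'

lemma summable_F {x t : ℝ} (hx : |x| < 1) (ht : |t| < 1) :
    Summable (fun p : ℕ × ℕ =>
      if 0 < p.1 ∧ p.1 < p.2 then x ^ p.1 * t ^ p.2 / ((p.1 : ℝ) * (p.2 : ℝ)) else 0) := by
  apply Summable.of_norm_bounded (summable_geom_prod hx ht)
  rintro ⟨j, k⟩
  dsimp only
  split_ifs with h
  · rw [Real.norm_eq_abs, abs_div, abs_mul, abs_pow, abs_pow]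
    have hjk : (1 : ℝ) ≤ |(j : ℝ) * (k : ℝ)| := by
      rw [abs_mul, Nat.abs_cast, Nat.abs_cast]
      have h1 : (1:ℝ) ≤ (j:ℝ) := by exact_mod_cast h.1
      have h2 : (1:ℝ) ≤ (k:ℝ) := by
        have : 0 < k := lt_trans h.1 h.2
        exact_mod_cast this
      nlinarith
    calc |x| ^ j * |t| ^ k / |(j : ℝ) * (k : ℝ)| ≤ |x| ^ j * |t| ^ k / 1 := by
          apply div_le_div_of_nonneg_left _ _ hjk <;> positivity
      _ = |x| ^ j * |t| ^ k := by rw [div_one]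
  · simp only [norm_zero]
    positivity

lemma Li11_eq {x t : ℝ} (hx : |x| < 1) (ht : |t| < 1) :
    Li11 x t = ∑' m : ℕ, cc x m * t ^ (m+1) / (m+1) := by
  classical
  set F : ℕ × ℕ → ℝ := fun p =>
    if 0 < p.1 ∧ p.1 < p.2 then x ^ p.1 * t ^ p.2 / ((p.1 : ℝ) * (p.2 : ℝ)) else 0 with hF
  have hsum : Summable F := summable_F hx ht
  have hG : Summable (fun p : ℕ × ℕ => F p.swap) := hsum.prod_symm
  have h1 : Li11 x t = ∑' (k : ℕ) (j : ℕ), F (j, k) := by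
    rw [Li11, ← (Equiv.prodComm ℕ ℕ).tsum_eq F]
    exact Summable.tsum_prod hG
  rw [h1]
  have hinner : ∀ k : ℕ, (∑' j : ℕ, F (j, k)) = ∑ j ∈ Finset.range k, F (j, k) := by
    intro k
    apply tsum_eq_sum
    intro j hj
    rw [Finset.mem_range, not_lt] at hj
    simp only [hF]
    rw [if_neg]
    rintro ⟨-, h2⟩; omega
  have hg : Summable (fun k : ℕ => ∑' j : ℕ, F (j, k)) := by
    apply HasSum.summable (a := ∑' p : ℕ × ℕ, F p.swap)
    exact hG.hasSum.prod_fiberwise (fun k => (hG.prod_factor k).hasSum)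
  simp_rw [hinner] at hg ⊢
  rw [Summable.tsum_eq_zero_add hg]
  have h0 : (∑ j ∈ Finset.range 0, F (j, 0)) = 0 := by simp
  rw [h0, zero_add]
  apply tsum_congr
  intro m
  rw [Finset.sum_range_succ']
  have hF0 : F (0, m+1) = 0 := by simp [hF]
  rw [hF0, add_zero]
  rw [cc, Finset.sum_mul, Finset.sum_div]
  apply Finset.sum_congr rfl
  intro i hi
  rw [Finset.mem_range] at hi
  simp only [hF]
  rw [if_pos ⟨Nat.succ_pos i, by omega⟩]
  push_cast
  rw [div_mul_eq_mul_div, div_div]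

lemma cc_abs_le {x : ℝ} (hx0 : 0 < x) (hx1 : x < 1) (m : ℕ) :
    |cc x m| ≤ -Real.log (1 - x) := by
  have hx : |x| < 1 := by rw [abs_of_pos hx0]; exact hx1
  have hS := Real.hasSum_pow_div_log_of_abs_lt_one hx
  have h1 : 0 ≤ cc x m := Finset.sum_nonneg fun j _ => by positivity
  rw [abs_of_nonneg h1, cc]
  exact sum_le_hasSum _ (fun j _ => by positivity) hS

lemma S_hasDerivAt {x r : ℝ} (hx0 : 0 < x) (hx1 : x < 1) (hr0 : 0 < r) (hr : r < 1)
    {t : ℝ} (ht : t ∈ Ioo (-r) r) :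
    HasDerivAt (fun u => ∑' m : ℕ, cc x m * u ^ (m+1) / (m+1))
      (∑' m : ℕ, cc x m * t ^ m) t := by
  set C := -Real.log (1 - x) with hC
  have hC0 : 0 ≤ C := by
    rw [hC, neg_nonneg]
    apply Real.log_nonpos <;> nlinarith
  apply hasDerivAt_tsum_of_isPreconnected
    (u := fun m : ℕ => C * r ^ m) (t := Ioo (-r) r)
    (g := fun m u => cc x m * u ^ (m+1) / (m+1))
    (g' := fun m u => cc x m * u ^ m) (y₀ := 0)
  · exact (summable_geometric_of_lt_one hr0.le hr).mul_left C
  · exact isOpen_Ioo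
  · exact (convex_Ioo _ _).isPreconnected
  · intro m u _
    have h1 : HasDerivAt (fun u : ℝ => u ^ (m+1)) ((m+1 : ℕ) * u ^ m) u := by
      simpa using hasDerivAt_pow (m+1) u
    have h2 := (h1.const_mul (cc x m)).div_const ((m : ℝ) + 1)
    have : ((m : ℝ) + 1) ≠ 0 := by positivity
    exact h2.congr_deriv (by push_cast; field_simp)
  · intro m u hu
    rw [Real.norm_eq_abs, abs_mul, abs_pow]
    have h1 : |u| ≤ r := by
      rw [abs_le]
      exact ⟨hu.1.le, hu.2.le⟩
    have h2 : |u| ^ m ≤ r ^ m := pow_le_pow_left₀ (abs_nonneg u) h1 m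
    have h3 := cc_abs_le hx0 hx1 m
    have h4 : (0:ℝ) ≤ |u| ^ m := by positivity
    nlinarith [abs_nonneg (cc x m)]
  · exact ⟨by linarith, hr0⟩
  · apply summable_of_ne_finset_zero (s := ∅)
    intro m _
    simp
  · exact ht

lemma deriv_sum_eq {x t : ℝ} (hx0 : 0 < x) (hx1 : x < 1) (ht0 : 0 ≤ t) (ht1 : t < 1) :
    ∑' m : ℕ, cc x m * t ^ m = -Real.log (1 - x * t) / (1 - t) := by
  classical
  set H : ℕ × ℕ → ℝ := fun p =>
    if p.1 < p.2 then x ^ (p.1+1) / (p.1+1) * t ^ p.2 else 0 with hH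
  have hxabs : |x| < 1 := by rw [abs_of_pos hx0]; exact hx1
  have htabs : |t| < 1 := by rw [abs_of_nonneg ht0]; exact ht1
  have hsumH : Summable H := by
    apply Summable.of_norm_bounded (summable_geom_prod hxabs htabs)
    rintro ⟨j, k⟩
    simp only [hH]
    split_ifs with h
    · rw [Real.norm_eq_abs, abs_mul, abs_div, abs_pow, abs_pow]
      have h1 : |x| ^ (j+1) ≤ |x| ^ j :=
        pow_le_pow_of_le_one (abs_nonneg x) hxabs.le (by omega)
      have h2 : |x| ^ (j+1) / |(j:ℝ) + 1| ≤ |x| ^ (j+1) := by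
        apply div_le_self (by positivity)
        rw [abs_of_nonneg (by positivity : (0:ℝ) ≤ (j:ℝ)+1)]
        linarith [Nat.cast_nonneg (α := ℝ) j]
      have h3 : (0:ℝ) ≤ |t| ^ k := by positivity
      have : |x| ^ (j+1) / |(j:ℝ) + 1| ≤ |x| ^ j := le_trans h2 h1
      calc |x| ^ (j+1) / |(j:ℝ) + 1| * |t| ^ k ≤ |x| ^ j * |t| ^ k := by
            apply mul_le_mul_of_nonneg_right this h3
        _ ≤ |x| ^ j * |t| ^ k := le_refl _
    · simp only [norm_zero]
      positivity
  have hterm : ∀ m : ℕ, cc x m * t ^ m = ∑' j : ℕ, H (j, m) := by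
    intro m
    have : (∑' j : ℕ, H (j, m)) = ∑ j ∈ Finset.range m, H (j, m) := by
      apply tsum_eq_sum
      intro j hj
      rw [Finset.mem_range, not_lt] at hj
      simp only [hH]
      rw [if_neg (by omega)]
    rw [this, cc, Finset.sum_mul]
    apply Finset.sum_congr rfl
    intro j hj
    rw [Finset.mem_range] at hj
    simp only [hH]
    rw [if_pos hj]
  have hswap : ∑' (m : ℕ) (j : ℕ), H (j, m) = ∑' (j : ℕ) (m : ℕ), H (j, m) :=
    Summable.tsum_comm (f := fun j m => H (j, m)) hsumH
  have hinner : ∀ j : ℕ, (∑' m : ℕ, H (j, m))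
      = x ^ (j+1) / (j+1) * t ^ (j+1) * (1 - t)⁻¹ := by
    intro j
    have hsump : Summable (fun m : ℕ => H (j, m)) := hsumH.prod_factor j
    rw [← Summable.sum_add_tsum_nat_add (j+1) hsump]
    have hzero : (∑ m ∈ Finset.range (j+1), H (j, m)) = 0 := by
      apply Finset.sum_eq_zero
      intro m hm
      rw [Finset.mem_range] at hm
      simp only [hH]
      rw [if_neg (by omega)]
    rw [hzero, zero_add]
    have heq : ∀ m : ℕ, H (j, m + (j+1)) = (x ^ (j+1) / (j+1) * t ^ (j+1)) * t ^ m := by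
      intro m
      simp only [hH]
      rw [if_pos (by omega), pow_add]
      ring
    simp_rw [heq]
    rw [tsum_mul_left, tsum_geometric_of_lt_one ht0 ht1]
  calc ∑' m : ℕ, cc x m * t ^ m = ∑' (m : ℕ) (j : ℕ), H (j, m) := tsum_congr hterm
    _ = ∑' (j : ℕ) (m : ℕ), H (j, m) := hswap
    _ = ∑' j : ℕ, x ^ (j+1) / (j+1) * t ^ (j+1) * (1 - t)⁻¹ := tsum_congr hinner
    _ = -Real.log (1 - x * t) / (1 - t) := by
        have habs : |x * t| < 1 := by
          rw [abs_mul]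
          calc |x| * |t| ≤ 1 * |t| := by
                apply mul_le_mul_of_nonneg_right hxabs.le (abs_nonneg t)
            _ = |t| := one_mul _
            _ < 1 := htabs
        have hS := Real.hasSum_pow_div_log_of_abs_lt_one habs
        have : ∀ j : ℕ, x ^ (j+1) / (j+1) * t ^ (j+1) * (1-t)⁻¹
            = ((x*t) ^ (j+1) / (j+1)) * (1-t)⁻¹ := by
          intro j
          rw [mul_pow]
          ring
        simp_rw [this]
        rw [tsum_mul_right, hS.tsum_eq, div_eq_mul_inv]
lemma Li11_zero {x : ℝ} (hx0 : 0 < x) (hx1 : x < 1) : Li11 x 0 = 0 := by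
  rw [Li11_eq (by rw [abs_of_pos hx0]; exact hx1) (by norm_num)]
  have : ∀ m : ℕ, cc x m * (0:ℝ) ^ (m+1) / (m+1) = 0 := by
    intro m
    rw [zero_pow (Nat.succ_ne_zero m)]
    ring
  simp_rw [this]
  exact tsum_zero

lemma Li11_hasDerivAt {x y t : ℝ} (hx0 : 0 < x) (hx1 : x < 1) (hy1 : y < 1)
    (ht : t ∈ Icc 0 y) :
    HasDerivAt (fun u => Li11 x u) (-Real.log (1 - x * t) / (1 - t)) t := by
  obtain ⟨ht0, hty⟩ := ht
  have hy0' : 0 ≤ y := ht0.trans hty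
  set r := (1 + y) / 2 with hr
  have hr0 : 0 < r := by rw [hr]; linarith
  have hr1 : r < 1 := by rw [hr]; linarith
  have htmem : t ∈ Ioo (-r) r := ⟨by rw [hr]; linarith, by rw [hr]; linarith⟩
  have hD := S_hasDerivAt hx0 hx1 hr0 hr1 htmem
  rw [deriv_sum_eq hx0 hx1 ht0 (lt_of_le_of_lt hty hy1)] at hD
  apply hD.congr_of_eventuallyEq
  filter_upwards [Ioo_mem_nhds htmem.1 htmem.2] with u hu
  exact Li11_eq (by rw [abs_of_pos hx0]; exact hx1)
    (by rw [abs_lt]; exact ⟨by linarith [hu.1], by linarith [hu.2]⟩)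


/-- `Li_{1,1}(x,y) = Li₂((xy-y)/(1-y)) - Li₂(y/(y-1)) - Li₂(xy)`
(restricting, as the context permits, to real `x, y ∈ (0,1)`, where all
dilogarithm arguments lie in `(-∞,1)`). -/
theorem doubleLog_as_dilogs (x y : ℝ) (hx0 : 0 < x) (hx1 : x < 1)
    (hy0 : 0 < y) (hy1 : y < 1) :
    Li11 x y = Li2R ((x * y - y) / (1 - y)) - Li2R (y / (y - 1)) - Li2R (x * y) := by
  set f : ℝ → ℝ := fun t => Li11 x t -
    (Li2R ((x * t - t) / (1 - t)) - Li2R (t / (t - 1)) - Li2R (x * t)) with hf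
  have key : ∀ t ∈ Icc (0:ℝ) y, HasDerivAt f 0 t := by
    intro t ht
    obtain ⟨ht0, hty⟩ := ht
    have ht1 : t < 1 := lt_of_le_of_lt hty hy1
    have h1t : (0:ℝ) < 1 - t := by linarith
    have hNum : HasDerivAt (fun u : ℝ => x * u - u) (x - 1) t := by
      exact (((hasDerivAt_id' t).const_mul x).sub (hasDerivAt_id' t)).congr_deriv (by ring)
    have hDen : HasDerivAt (fun u : ℝ => 1 - u) (-1) t := by
      exact (hasDerivAt_id' t).const_sub (1:ℝ)
    have hu : HasDerivAt (fun u : ℝ => (x * u - u) / (1 - u))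
        ((x - 1) / (1 - t) ^ 2) t := by
      have h := hNum.div hDen (by linarith : (1:ℝ) - t ≠ 0)
      exact h.congr_deriv (by ring)
    have hv : HasDerivAt (fun u : ℝ => u / (u - 1)) (-1 / (t - 1) ^ 2) t := by
      have hd : HasDerivAt (fun u : ℝ => u - 1) 1 t := by
        exact (hasDerivAt_id' t).sub_const (1:ℝ)
      have h := (hasDerivAt_id t).div hd (by linarith : t - 1 ≠ 0)
      exact h.congr_deriv (by simp only [id]; ring)
    have hw : HasDerivAt (fun u : ℝ => x * u) x t := by
      simpa using (hasDerivAt_id t).const_mul x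
    have hut1 : (x * t - t) / (1 - t) < 1 := by
      have hnum : x * t - t ≤ 0 := by nlinarith
      have := div_nonpos_of_nonpos_of_nonneg hnum h1t.le
      linarith
    have hvt1 : t / (t - 1) < 1 := by
      have := div_nonpos_of_nonneg_of_nonpos ht0 (by linarith : t - 1 ≤ 0)
      linarith
    have hwt1 : x * t < 1 := by nlinarith
    have hA : HasDerivAt (fun u : ℝ => Li2R ((x * u - u) / (1 - u)))
        (-(gL ((x * t - t) / (1 - t))) * ((x - 1) / (1 - t) ^ 2)) t :=
      by have := (Li2R_hasDerivAt hut1).comp t hu; exact this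
    have hB : HasDerivAt (fun u : ℝ => Li2R (u / (u - 1)))
        (-(gL (t / (t - 1))) * (-1 / (t - 1) ^ 2)) t :=
      by have := (Li2R_hasDerivAt hvt1).comp t hv; exact this
    have hC : HasDerivAt (fun u : ℝ => Li2R (x * u))
        (-(gL (x * t)) * x) t :=
      by have := (Li2R_hasDerivAt hwt1).comp t hw; exact this
    have hL := Li11_hasDerivAt hx0 hx1 hy1 ⟨ht0, hty⟩
    have hF : HasDerivAt f
        (-Real.log (1 - x * t) / (1 - t) -
          (-(gL ((x * t - t) / (1 - t))) * ((x - 1) / (1 - t) ^ 2) -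
            -(gL (t / (t - 1))) * (-1 / (t - 1) ^ 2) - -(gL (x * t)) * x)) t :=
      hL.sub ((hA.sub hB).sub hC)
    have heq : -Real.log (1 - x * t) / (1 - t) -
          (-(gL ((x * t - t) / (1 - t))) * ((x - 1) / (1 - t) ^ 2) -
            -(gL (t / (t - 1))) * (-1 / (t - 1) ^ 2) - -(gL (x * t)) * x) = 0 := by
      rcases eq_or_lt_of_le ht0 with h0 | h0
      · subst h0  -- wrong direction maybe
        norm_num [gL_zero]
      · have htne : t ≠ 0 := ne_of_gt h0
        have hu_ne : (x * t - t) / (1 - t) ≠ 0 :=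
          ne_of_lt (div_neg_of_neg_of_pos (by nlinarith) h1t)
        have hv_ne : t / (t - 1) ≠ 0 :=
          ne_of_lt (div_neg_of_pos_of_neg h0 (by linarith))
        have hw_ne : x * t ≠ 0 := by positivity
        rw [gL_ne hu_ne, gL_ne hv_ne, gL_ne hw_ne]
        have hxt0 : (0:ℝ) < 1 - x * t := by linarith
        have h1u : 1 - (x * t - t) / (1 - t) = (1 - x * t) / (1 - t) := by
          field_simp
          ring
        have h1v : 1 - t / (t - 1) = (1 - t)⁻¹ := by
          have hne2 : t - 1 ≠ 0 := by linarith
          rw [inv_eq_one_div, eq_div_iff (by linarith : (1:ℝ) - t ≠ 0)]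
          have hne2 : t - 1 ≠ 0 := by linarith
          field_simp
          ring
        rw [h1u, h1v, Real.log_div (ne_of_gt hxt0) (ne_of_gt h1t), Real.log_inv]
        set a := Real.log (1 - x * t)
        set b := Real.log (1 - t)
        have hne1 : (1:ℝ) - t ≠ 0 := by linarith
        have hne2 : t - 1 ≠ 0 := by linarith
        have hne3 : x * t - t ≠ 0 := by nlinarith
        have hne4 : x ≠ 0 := ne_of_gt hx0
        have hne5 : x - 1 ≠ 0 := by linarith
        field_simp
        ring
    exact heq ▸ hF
  have hcont : ContinuousOn f (Icc 0 y) :=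
    fun t ht => ((key t ht).continuousAt).continuousWithinAt
  have hconst := constant_of_has_deriv_right_zero hcont
    (fun t ht => (key t (Ico_subset_Icc_self ht)).hasDerivWithinAt)
  have hfy := hconst y (right_mem_Icc.2 hy0.le)
  have hf0 : f 0 = 0 := by
    have h1 : Li11 x 0 = 0 := Li11_zero hx0 hx1
    simp only [hf]
    norm_num [h1, Li2R_zero]
  rw [hf0] at hfy
  have : Li11 x y -
      (Li2R ((x * y - y) / (1 - y)) - Li2R (y / (y - 1)) - Li2R (x * y)) = 0 := hfy
  linarith
end

section
/- The single-valued double logarithm satisfies the functional equation $\mathcal{L}_{1,1}(x,y) = -\mathcal{L}_{1,1}\left(1-x, \frac{y}{y-1}\right)$ for all $x, y$ in a domain where both sides are defined (e.g. $x \in (0,1)$ and $y$ in the open upper half plane). -/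
open MeasureTheory Set Complex intervalIntegral Metric Topology Filter

/-- The dilogarithm on `ℂ \ [1,∞)` (principal branch), via
`Li₂(z) = -∫_0^1 log(1 - z t)/t dt`. -/
noncomputable def Li2C (z : ℂ) : ℂ := -∫ t in (0:ℝ)..1, Complex.log (1 - z * t) / (t : ℂ)

/-- The single-valued dilogarithm `𝓛₂(z) = Im(Li₂ z) + arg(1-z) log|z|`. -/
noncomputable def L2 (z : ℂ) : ℝ := (Li2C z).im + (1 - z).arg * Real.log ‖z‖

/-- The single-valued double logarithm, expressed via `𝓛₂`:
`𝓛_{1,1}(x,y) = 𝓛₂((xy-y)/(1-y)) - 𝓛₂(y/(y-1)) - 𝓛₂(xy)`. -/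
noncomputable def L11 (x y : ℂ) : ℝ :=
  L2 ((x * y - y) / (1 - y)) - L2 (y / (y - 1)) - L2 (x * y)


def Om (z : ℂ) : Prop := z.im ≠ 0 ∨ z.re < 1

lemma isOpen_Om : IsOpen {z : ℂ | Om z} := by
  have : {z : ℂ | Om z} = (Complex.im ⁻¹' {0})ᶜ ∪ Complex.re ⁻¹' (Set.Iio 1) := by
    ext z; simp [Om]
  rw [this]
  exact (IsClosed.preimage Complex.continuous_im isClosed_singleton).isOpen_compl.union
    (isOpen_Iio.preimage Complex.continuous_re)

lemma om_slit {z : ℂ} (hz : Om z) {t : ℝ} (ht0 : 0 ≤ t) (ht1 : t ≤ 1) :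
    (1 - z * (t : ℂ)) ∈ Complex.slitPlane := by
  rw [Complex.mem_slitPlane_iff]
  by_cases him : z.im = 0
  · left
    have hre : z.re < 1 := hz.resolve_left (by simpa using him)
    have : (1 - z * (t:ℂ)).re = 1 - z.re * t := by simp [him]
    rw [this]
    rcases le_or_gt 0 z.re with h | h
    · nlinarith [mul_le_of_le_one_right h ht1]
    · nlinarith [mul_nonpos_of_nonpos_of_nonneg h.le ht0]
  · rcases eq_or_lt_of_le ht0 with h0 | h0
    · left; simp [← h0]
    · right
      have : (1 - z * (t:ℂ)).im = -(z.im * t) := by simp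
      rw [this]
      intro h
      rw [neg_eq_zero, mul_eq_zero] at h
      exact him (h.resolve_right (by positivity))

lemma om_ne {z : ℂ} (hz : Om z) {t : ℝ} (ht0 : 0 ≤ t) (ht1 : t ≤ 1) :
    (1 - z * (t : ℂ)) ≠ 0 := Complex.slitPlane_ne_zero (om_slit hz ht0 ht1)

noncomputable def G (z : ℂ) (t : ℝ) : ℂ :=
  if t = 0 then -z else Complex.log (1 - z * t) / (t : ℂ)

lemma Li2C_eq (z : ℂ) : Li2C z = -∫ t in (0:ℝ)..1, G z t := by
  unfold Li2C
  congr 1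
  apply intervalIntegral.integral_congr_ae
  filter_upwards with t ht
  rw [Set.uIoc_of_le (by norm_num : (0:ℝ) ≤ 1)] at ht
  rw [G, if_neg (ne_of_gt ht.1)]

lemma hasDerivAt_logC {z : ℂ} (hz : Om z) :
    HasDerivAt (fun s : ℝ => Complex.log (1 - z * s)) (-z) 0 := by
  have hinner : HasDerivAt (fun w : ℂ => 1 - z * w) (-z) 0 := by
    simpa using ((hasDerivAt_id (0:ℂ)).const_mul z).const_sub 1
  have hsl : (1 - z * (0:ℂ)) ∈ Complex.slitPlane := by
    simpa using om_slit hz (le_refl (0:ℝ)) zero_le_one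
  have hC := (Complex.hasDerivAt_log hsl).comp 0 hinner
  have hC' : HasDerivAt (fun w : ℂ => Complex.log (1 - z * w)) (-z) 0 := by
    simp at hC; exact hC
  simpa using hC'.comp_ofReal

lemma contG {z : ℂ} (hz : Om z) : ContinuousOn (G z) (Icc 0 1) := by
  intro t ht
  rcases eq_or_ne t 0 with rfl | ht0
  · rw [← continuousWithinAt_diff_self]
    have hd := (hasDerivAt_iff_tendsto_slope).mp (hasDerivAt_logC hz)
    have hmono : 𝓝[Icc (0:ℝ) 1 \ {0}] 0 ≤ 𝓝[≠] (0:ℝ) :=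
      nhdsWithin_mono 0 (fun s hs => hs.2)
    have : Filter.Tendsto (G z) (𝓝[Icc (0:ℝ) 1 \ {0}] 0) (𝓝 (-z)) := by
      apply Filter.Tendsto.congr' _ (hd.mono_left hmono)
      filter_upwards [self_mem_nhdsWithin] with s hs
      have hs0 : s ≠ 0 := hs.2
      rw [G, if_neg hs0]
      rw [slope]
      simp [Complex.real_smul, div_eq_mul_inv, mul_comm]
    rw [ContinuousWithinAt, G, if_pos rfl]
    exact this
  · apply ContinuousAt.continuousWithinAt
    have hca : ContinuousAt (fun s : ℝ => Complex.log (1 - z * s) / (s : ℂ)) t := by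
      apply ContinuousAt.div
      · exact ContinuousAt.comp (x := t) (g := Complex.log)
          (f := fun s : ℝ => 1 - z * s) (continuousAt_clog (om_slit hz ht.1 ht.2)) (by fun_prop)
      · fun_prop
      · exact_mod_cast ht0
    apply hca.congr
    filter_upwards [isOpen_ne.mem_nhds ht0] with s hs
    rw [G, if_neg hs]

set_option maxHeartbeats 1000000 in
lemma hasDerivAt_Li2C {z₀ : ℂ} (hz : Om z₀) :
    HasDerivAt Li2C (∫ t in (0:ℝ)..1, (1 - z₀ * t)⁻¹) z₀ := by
  obtain ⟨ε, hε, hball⟩ : ∃ ε > 0, closedBall z₀ ε ⊆ {z | Om z} := by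
    obtain ⟨δ, hδ, h⟩ := Metric.isOpen_iff.mp isOpen_Om z₀ hz
    exact ⟨δ/2, by linarith, (closedBall_subset_ball (by linarith)).trans h⟩
  have hScomp : IsCompact (closedBall z₀ ε ×ˢ Icc (0:ℝ) 1) :=
    (isCompact_closedBall _ _).prod isCompact_Icc
  have hSne : (closedBall z₀ ε ×ˢ Icc (0:ℝ) 1).Nonempty :=
    ⟨⟨z₀, 0⟩, by simp [hε.le]⟩
  have hfc : ContinuousOn (fun p : ℂ × ℝ => ‖1 - p.1 * (p.2 : ℂ)‖)
      (closedBall z₀ ε ×ˢ Icc (0:ℝ) 1) := by fun_prop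
  obtain ⟨p, hpS, hpmin⟩ := hScomp.exists_isMinOn hSne hfc
  rw [Set.mem_prod] at hpS
  set δ := ‖1 - p.1 * (p.2 : ℂ)‖ with hδdef
  have hδpos : 0 < δ := by
    rw [hδdef, norm_pos_iff]
    exact om_ne (hball hpS.1) hpS.2.1 hpS.2.2
  have hmin : ∀ z ∈ closedBall z₀ ε, ∀ t ∈ Icc (0:ℝ) 1, δ ≤ ‖1 - z * (t:ℂ)‖ := by
    intro z hzb t htb
    exact isMinOn_iff.mp hpmin (z, t) (Set.mk_mem_prod hzb htb)
  have hIoc : Set.uIoc (0:ℝ) 1 = Ioc (0:ℝ) 1 := Set.uIoc_of_le zero_le_one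
  have h1 : ∀ᶠ z in 𝓝 z₀,
      AEStronglyMeasurable (fun t => G z t) (volume.restrict (Set.uIoc (0:ℝ) 1)) := by
    filter_upwards [Metric.closedBall_mem_nhds z₀ hε] with z hzb
    rw [hIoc]
    exact ContinuousOn.aestronglyMeasurable
      ((contG (hball hzb)).mono Ioc_subset_Icc_self) measurableSet_Ioc
  have h2 : IntervalIntegrable (fun t => G z₀ t) volume 0 1 := by
    apply ContinuousOn.intervalIntegrable
    rw [Set.uIcc_of_le zero_le_one]
    exact contG hz
  have h3 : AEStronglyMeasurable (fun t : ℝ => -(1 - z₀ * (t:ℂ))⁻¹)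
      (volume.restrict (Set.uIoc (0:ℝ) 1)) := by
    rw [hIoc]
    apply ContinuousOn.aestronglyMeasurable _ measurableSet_Ioc
    apply ContinuousOn.neg
    apply ContinuousOn.inv₀
    · fun_prop
    · intro t ht
      exact om_ne hz ht.1.le ht.2
  have h4 : ∀ᵐ t ∂(volume : Measure ℝ), t ∈ Set.uIoc (0:ℝ) 1 →
      ∀ z ∈ ball z₀ ε, ‖-(1 - z * (t:ℂ))⁻¹‖ ≤ δ⁻¹ := by
    filter_upwards with t ht z hzb
    rw [norm_neg, norm_inv]
    rw [hIoc] at ht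
    exact inv_anti₀ hδpos
      (hmin z (ball_subset_closedBall hzb) t ⟨ht.1.le, ht.2⟩)
  have h5 : IntervalIntegrable (fun _ : ℝ => δ⁻¹) volume 0 1 := intervalIntegrable_const
  have h6 : ∀ᵐ t ∂(volume : Measure ℝ), t ∈ Set.uIoc (0:ℝ) 1 →
      ∀ z ∈ ball z₀ ε, HasDerivAt (fun z => G z t) (-(1 - z * (t:ℂ))⁻¹) z := by
    filter_upwards with t ht z hzb
    rw [hIoc] at ht
    have ht0 : (t:ℂ) ≠ 0 := by exact_mod_cast ne_of_gt ht.1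
    have hinner : HasDerivAt (fun z : ℂ => 1 - z * (t:ℂ)) (-(t:ℂ)) z := by
      simpa using ((hasDerivAt_id z).mul_const (t:ℂ)).const_sub 1
    have hsl : (1 - z * (t:ℂ)) ∈ Complex.slitPlane :=
      om_slit (hball (ball_subset_closedBall hzb)) ht.1.le ht.2
    have hcomp := ((Complex.hasDerivAt_log hsl).comp z hinner).div_const (t:ℂ)
    have heq : (fun z : ℂ => Complex.log (1 - z * (t:ℂ)) / (t:ℂ)) = fun z => G z t := by
      funext w; rw [G, if_neg (ne_of_gt ht.1)]
    rw [← heq]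
    refine hcomp.congr_deriv (Eq.symm ?_)
    rw [mul_neg, neg_div, mul_comm, mul_div_assoc, div_self ht0, mul_one]
  have key := (intervalIntegral.hasDerivAt_integral_of_dominated_loc_of_deriv_le
    (ball_mem_nhds z₀ hε) h1 h2 h3 h4 h5 h6).2
  have hfun : Li2C = fun z => -∫ t in (0:ℝ)..1, G z t := funext Li2C_eq
  have h := key.neg
  rw [intervalIntegral.integral_neg, neg_neg] at h
  rw [hfun]
  exact h

lemma Li2C_zero : Li2C 0 = 0 := by
  have : ∀ t : ℝ, Complex.log (1 - 0 * (t:ℂ)) / (t:ℂ) = 0 := by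
    intro t; simp
  simp [Li2C, this]

lemma integral_inv_eq {z : ℂ} (hz : Om z) (h0 : z ≠ 0) :
    ∫ t in (0:ℝ)..1, (1 - z * t)⁻¹ = -Complex.log (1 - z) / z := by
  have hderiv : ∀ t ∈ Set.uIcc (0:ℝ) 1,
      HasDerivAt (fun s : ℝ => -Complex.log (1 - z * s) / z) ((1 - z * t)⁻¹) t := by
    intro t ht
    rw [Set.uIcc_of_le zero_le_one] at ht
    have hinner : HasDerivAt (fun s : ℝ => 1 - z * (s:ℂ)) (-z) t := by
      simpa using (((hasDerivAt_id t).ofReal_comp).const_mul z).const_sub 1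
    have hsl := om_slit hz ht.1 ht.2
    have hlog := (Complex.hasDerivAt_log hsl).comp t hinner
    have := (hlog.neg).div_const z
    refine this.congr_deriv (Eq.symm ?_)
    field_simp [om_ne hz ht.1 ht.2]
  have hint : IntervalIntegrable (fun t : ℝ => (1 - z * t)⁻¹) volume 0 1 := by
    apply ContinuousOn.intervalIntegrable
    rw [Set.uIcc_of_le zero_le_one]
    apply ContinuousOn.inv₀
    · fun_prop
    · intro t ht; exact om_ne hz ht.1 ht.2
  have := intervalIntegral.integral_eq_sub_of_hasDerivAt hderiv hint
  rw [this]
  simp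

lemma hasDerivAt_Li2C' {z : ℂ} (hz : Om z) (h0 : z ≠ 0) :
    HasDerivAt Li2C (-Complex.log (1 - z) / z) z := by
  have := hasDerivAt_Li2C hz
  rwa [integral_inv_eq hz h0] at this

lemma one_sub_slit {u : ℂ} (hu : 0 < u.im ∨ u = 0) : (1 - u) ∈ Complex.slitPlane := by
  rw [Complex.mem_slitPlane_iff]
  rcases hu with h | rfl
  · right; simp [ne_of_lt, neg_ne_zero]; exact ne_of_gt h
  · left; norm_num

lemma hasDerivAt_g {u : ℂ} (hu : 0 < u.im ∨ u = 0) :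
    HasDerivAt (fun y : ℂ => Li2C (y / (y - 1)) + Li2C y + (Complex.log (1 - y))^2 / 2) 0 u := by
  have hu1 : u ≠ 1 := by
    rcases hu with h | rfl
    · intro h1; rw [h1] at h; simp at h
    · norm_num
  have hu1' : u - 1 ≠ 0 := sub_ne_zero.mpr hu1
  have hOmu : Om u := by
    rcases hu with h | rfl
    · exact Or.inl (ne_of_gt h)
    · exact Or.inr (by norm_num)
  have hOmw : Om (u / (u - 1)) := by
    rcases hu with h | rfl
    · left
      rw [Complex.div_im]
      have hns : 0 < Complex.normSq (u - 1) := by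
        rw [Complex.normSq_pos]; exact hu1'
      have heq : u.im * (u - 1).re / Complex.normSq (u - 1) -
          u.re * (u - 1).im / Complex.normSq (u - 1) = -(u.im / Complex.normSq (u - 1)) := by
        simp only [Complex.sub_re, Complex.sub_im, Complex.one_re, Complex.one_im]
        ring
      rw [heq]
      have : 0 < u.im / Complex.normSq (u - 1) := div_pos h hns
      exact neg_ne_zero.mpr (ne_of_gt this)
    · right; norm_num
  have hinner : HasDerivAt (fun y : ℂ => y / (y - 1)) ((1 * (u - 1) - u * 1) / (u - 1)^2) u :=
    (hasDerivAt_id u).div ((hasDerivAt_id u).sub_const 1) hu1'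
  have hchain := (hasDerivAt_Li2C hOmw).comp u hinner
  have hLu := hasDerivAt_Li2C hOmu
  have hlog1u : HasDerivAt (fun y : ℂ => Complex.log (1 - y)) (-(1 - u)⁻¹) u := by
    have hin : HasDerivAt (fun y : ℂ => 1 - y) (-1) u := by
      simpa using (hasDerivAt_id u).const_sub 1
    have := (Complex.hasDerivAt_log (one_sub_slit hu)).comp u hin
    refine this.congr_deriv (Eq.symm ?_)
    ring
  have hsq : HasDerivAt (fun y : ℂ => (Complex.log (1 - y))^2 / 2)
      ((-(1 - u)⁻¹ * Complex.log (1 - u) + Complex.log (1 - u) * -(1 - u)⁻¹) / 2) u := by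
    have h2 := (hlog1u.mul hlog1u).div_const 2
    simp only [pow_two]; exact h2
  have total := (hchain.add hLu).add hsq
  refine total.congr_deriv (Eq.symm ?_)
  rcases hu with h | rfl
  · have hu0 : u ≠ 0 := by
      intro h0; rw [h0] at h; simp at h
    have hw0 : u / (u - 1) ≠ 0 := div_ne_zero hu0 hu1'
    have h1u : (1 : ℂ) - u ≠ 0 := by
      intro h0
      have : u = 1 := by linear_combination -h0
      exact hu1 this
    rw [integral_inv_eq hOmw hw0, integral_inv_eq hOmu hu0]
    have h1w : 1 - u / (u - 1) = (1 - u)⁻¹ := by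
      field_simp; ring
    rw [h1w, Complex.log_inv _ (by
      intro hπ
      rw [Complex.arg_eq_pi_iff] at hπ
      have : (1 - u).im = -u.im := by simp
      rw [this] at hπ
      linarith [hπ.2, h])]
    field_simp
    ring
  · rw [show (0:ℂ) / (0 - 1) = 0 by norm_num]
    have : ∫ t in (0:ℝ)..1, (1 - (0:ℂ) * t)⁻¹ = 1 := by
      norm_num
    rw [this]
    norm_num

lemma landen {y : ℂ} (hy : 0 < y.im) :
    Li2C (y / (y - 1)) + Li2C y + (Complex.log (1 - y))^2 / 2 = 0 := by
  set g : ℂ → ℂ := fun u => Li2C (u / (u - 1)) + Li2C u + (Complex.log (1 - u))^2 / 2 with hg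
  have hzero : ∀ u ∈ segment ℝ (0:ℂ) y, HasFDerivWithinAt g (0 : ℂ →L[ℝ] ℂ) (segment ℝ 0 y) u := by
    intro u huseg
    obtain ⟨a, b, ha, hb, hab, hx⟩ := huseg
    have hu : 0 < u.im ∨ u = 0 := by
      rcases eq_or_lt_of_le hb with h0 | h0
      · right; rw [← hx, ← h0]; simp
      · left
        rw [← hx]
        simp only [smul_zero, zero_add, Complex.smul_im]
        positivity
    have hd := (hasDerivAt_g hu).hasFDerivAt
    have hmap : (ContinuousLinearMap.toSpanSingleton ℂ (0:ℂ)).restrictScalars ℝ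
        = (0 : ℂ →L[ℝ] ℂ) := by
      ext z
      simp
    have := hd.restrictScalars ℝ
    rw [hmap] at this
    exact this.hasFDerivWithinAt
  have hbound := Convex.norm_image_sub_le_of_norm_hasFDerivWithin_le (C := 0) hzero
    (fun u _ => by simp) (convex_segment (0:ℂ) y)
    (left_mem_segment ℝ (0:ℂ) y) (right_mem_segment ℝ (0:ℂ) y)
  have hgy : g y = g 0 := by
    rw [← sub_eq_zero, ← norm_eq_zero]
    have h0 : ‖g y - g 0‖ ≤ 0 := by simpa using hbound
    linarith [norm_nonneg (g y - g 0)]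
  have hg0 : g 0 = 0 := by
    simp [hg, Li2C_zero]
  have hfin : g y = 0 := hgy.trans hg0
  simpa [hg] using hfin

lemma L2_neg {y : ℂ} (hy : 0 < y.im) : L2 (y / (y - 1)) = -L2 y := by
  have hy0 : y ≠ 0 := by intro h; rw [h] at hy; simp at hy
  have hy1' : y - 1 ≠ 0 := by
    intro h
    have := congrArg Complex.im h
    simp at this
    linarith
  have h1y : (1:ℂ) - y ≠ 0 := by
    intro h
    have := congrArg Complex.im h
    simp at this
    linarith
  have hkey := landen hy
  have hLi : Li2C (y / (y - 1)) = -Li2C y - (Complex.log (1 - y))^2 / 2 := by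
    linear_combination hkey
  have him : (Li2C (y / (y - 1))).im
      = -(Li2C y).im - (Real.log ‖1 - y‖) * (1 - y).arg := by
    rw [hLi]
    have hsq : ((Complex.log (1 - y))^2).im
        = 2 * (Real.log ‖1 - y‖) * (1 - y).arg := by
      rw [pow_two, Complex.mul_im, Complex.log_re, Complex.log_im]
      ring
    simp only [Complex.sub_im, Complex.neg_im]
    have h2 : (Complex.log (1 - y) ^ 2 / 2).im = (Complex.log (1 - y) ^ 2).im / 2 := by simp
    rw [h2, hsq]
    ring
  have h1w : 1 - y / (y - 1) = (1 - y)⁻¹ := by field_simp; ring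
  have hargne : (1 - y).arg ≠ Real.pi := by
    intro hπ
    rw [Complex.arg_eq_pi_iff] at hπ
    have h2 : (1 - y).im = -y.im := by simp
    rw [h2] at hπ
    linarith [hπ.2]
  have harg : (1 - y / (y - 1)).arg = -(1 - y).arg := by
    rw [h1w, Complex.arg_inv, if_neg hargne]
  have hnorm : Real.log ‖y / (y - 1)‖ = Real.log ‖y‖ - Real.log ‖1 - y‖ := by
    rw [norm_div, Real.log_div (norm_ne_zero_iff.mpr hy0) (norm_ne_zero_iff.mpr hy1'),
      norm_sub_rev]
  unfold L2
  rw [him, harg, hnorm]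
  have habs : ‖1 - y‖ = ‖1 - y‖ := rfl
  rw [habs]
  ring

theorem L11_functional_equation (x : ℝ) (hx0 : 0 < x) (hx1 : x < 1)
    (y : ℂ) (hy : 0 < y.im) :
    L11 (x : ℂ) y = -L11 ((1 - x : ℝ) : ℂ) (y / (y - 1)) := by
  have hy1' : y - 1 ≠ 0 := by
    intro h
    have := congrArg Complex.im h
    simp at this
    linarith
  have h1y : (1:ℂ) - y ≠ 0 := by
    intro h
    have := congrArg Complex.im h
    simp at this
    linarith
  have h1w : 1 - y / (y - 1) ≠ 0 := by
    rw [show 1 - y / (y - 1) = -(y - 1)⁻¹ by field_simp; ring]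
    simp [hy1']
  have e1 : y / (y - 1) / (y / (y - 1) - 1) = y := by
    rw [show y / (y - 1) - 1 = (y - (y - 1)) / (y - 1) by field_simp, div_div_div_cancel_right₀]
    · simp
    · exact hy1'
  have e2 : (((1 - x : ℝ) : ℂ) * (y / (y - 1)) - y / (y - 1)) / (1 - y / (y - 1))
      = (x : ℂ) * y := by
    push_cast
    field_simp
    ring
  have e3 : ((1 - x : ℝ) : ℂ) * (y / (y - 1)) = ((x : ℂ) * y - y) / (1 - y) := by
    push_cast
    field_simp
    ring
  unfold L11
  rw [e1, e2, e3, L2_neg hy]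
  ring
end
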